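/- With θ as defined, θ(2) = 2. -/

import Mathlib

/-- An equation of `E_n`: `Sum.inl (i, j, k)` means `xᵢ · xⱼ = x_k`,
`Sum.inr (i, k)` means `xᵢ + 1 = x_k`. -/
def SatisfiesEq (n : ℕ) (x : Fin n → ℕ)
    (e : (Fin n × Fin n × Fin n) ⊕ (Fin n × Fin n)) : Prop :=
  match e with
  | Sum.inl (i, j, k) => x i * x j = x k
  | Sum.inr (i, k) => x i + 1 = x k

/-- `x` is a positive-integer solution of the system `S ⊆ E_n`. -/
def IsSolution (n : ℕ) (S : Set ((Fin n × Fin n × Fin n) ⊕ (Fin n × Fin n)))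
    (x : Fin n → ℕ) : Prop :=
  (∀ i, 0 < x i) ∧ ∀ e ∈ S, SatisfiesEq n x e

/-- `θ(n)`: the smallest positive integer `b` such that every system `S ⊆ E_n` which is
solvable in positive integers and has only finitely many solutions in positive integers
has a solution with all entries in `[1, b]`. -/
noncomputable def theta (n : ℕ) : ℕ :=
  sInf { b : ℕ | 0 < b ∧ ∀ S : Set ((Fin n × Fin n × Fin n) ⊕ (Fin n × Fin n)),
    (∃ x, IsSolution n S x) → { x | IsSolution n S x }.Finite →
    ∃ x, IsSolution n S x ∧ ∀ i, x i ≤ b }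

/-- Every solvable system in two variables has a solution with entries ≤ 2. -/
lemma bounded_two (S : Set ((Fin 2 × Fin 2 × Fin 2) ⊕ (Fin 2 × Fin 2)))
    (h : ∃ x, IsSolution 2 S x) :
    ∃ x, IsSolution 2 S x ∧ ∀ i, x i ≤ 2 := by
  obtain ⟨x, hpos, hsat⟩ := h
  by_cases hA : (Sum.inr ((0 : Fin 2), (1 : Fin 2)) :
      (Fin 2 × Fin 2 × Fin 2) ⊕ (Fin 2 × Fin 2)) ∈ S
  · -- x 0 + 1 = x 1 is in S; use (1, 2)
    have hx01 : x 0 + 1 = x 1 := hsat _ hA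
    have hp0 := hpos 0
    refine ⟨![1, 2], ⟨fun i => by fin_cases i <;> norm_num, ?_⟩,
      fun i => by fin_cases i <;> norm_num⟩
    intro e he
    rcases e with ⟨i, j, k⟩ | ⟨i, k⟩
    · have hx := hsat _ he
      simp only [SatisfiesEq] at hx ⊢
      fin_cases i <;> fin_cases j <;> fin_cases k <;>
        simp_all <;>
        (rcases Nat.lt_or_ge (x 0) 2 with h | h <;>
          nlinarith [hx, hx01, hp0, hpos, h])
    · have hx := hsat _ he
      simp only [SatisfiesEq] at hx ⊢
      fin_cases i <;> fin_cases k <;> simp_all <;> omega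
  · by_cases hB : (Sum.inr ((1 : Fin 2), (0 : Fin 2)) :
        (Fin 2 × Fin 2 × Fin 2) ⊕ (Fin 2 × Fin 2)) ∈ S
    · -- x 1 + 1 = x 0 is in S; use (2, 1)
      have hx10 : x 1 + 1 = x 0 := hsat _ hB
      have hp1 := hpos 1
      refine ⟨![2, 1], ⟨fun i => by fin_cases i <;> norm_num, ?_⟩,
        fun i => by fin_cases i <;> norm_num⟩
      intro e he
      rcases e with ⟨i, j, k⟩ | ⟨i, k⟩
      · have hx := hsat _ he
        simp only [SatisfiesEq] at hx ⊢
        fin_cases i <;> fin_cases j <;> fin_cases k <;>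
          simp_all <;>
          (rcases Nat.lt_or_ge (x 1) 2 with h | h <;>
            nlinarith [hx, hx10, hpos, hp1, h])
      · have hx := hsat _ he
        simp only [SatisfiesEq] at hx ⊢
        fin_cases i <;> fin_cases k <;> simp_all <;> omega
    · -- no successor equation; use (1, 1)
      refine ⟨![1, 1], ⟨fun i => by fin_cases i <;> norm_num, ?_⟩,
        fun i => by fin_cases i <;> norm_num⟩
      intro e he
      rcases e with ⟨i, j, k⟩ | ⟨i, k⟩
      · simp only [SatisfiesEq]
        fin_cases i <;> fin_cases j <;> fin_cases k <;> norm_num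
      · have hx := hsat _ he
        simp only [SatisfiesEq] at hx ⊢
        fin_cases i <;> fin_cases k
        · omega
        · exact absurd he hA
        · exact absurd he hB
        · omega

theorem theta_two : theta 2 = 2 := by
  have hmem : 2 ∈ { b : ℕ | 0 < b ∧
      ∀ S : Set ((Fin 2 × Fin 2 × Fin 2) ⊕ (Fin 2 × Fin 2)),
      (∃ x, IsSolution 2 S x) → { x | IsSolution 2 S x }.Finite →
      ∃ x, IsSolution 2 S x ∧ ∀ i, x i ≤ 2 } := by
    exact ⟨two_pos, fun S hS _ => bounded_two S hS⟩
  refine le_antisymm (Nat.sInf_le hmem) (le_csInf ⟨2, hmem⟩ ?_)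
  rintro b ⟨hb, hall⟩
  by_contra hlt
  push_neg at hlt
  have hb1 : b = 1 := by omega
  subst hb1
  -- the system {x₀·x₀ = x₀, x₀ + 1 = x₁}
  set S : Set ((Fin 2 × Fin 2 × Fin 2) ⊕ (Fin 2 × Fin 2)) :=
    {Sum.inl ((0 : Fin 2), (0 : Fin 2), (0 : Fin 2)),
     Sum.inr ((0 : Fin 2), (1 : Fin 2))} with hSdef
  have hsol : IsSolution 2 S ![1, 2] := by
    refine ⟨fun i => by fin_cases i <;> norm_num, ?_⟩
    intro e he
    rcases he with rfl | rfl <;> simp [SatisfiesEq]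
  have huniq : ∀ y, IsSolution 2 S y → y = ![1, 2] := by
    rintro y ⟨hpos, hsat⟩
    have h1 : y 0 * y 0 = y 0 := hsat _ (Set.mem_insert _ _)
    have h2 : y 0 + 1 = y 1 := hsat _ (Set.mem_insert_of_mem _ rfl)
    have hp := hpos 0
    have hy0 : y 0 = 1 := by nlinarith
    funext i
    fin_cases i <;> simp <;> omega
  have hfin : { x | IsSolution 2 S x }.Finite := by
    apply Set.Finite.subset (Set.finite_singleton ![1, 2])
    intro y hy
    exact huniq y hy
  obtain ⟨z, hz, hzb⟩ := hall S ⟨![1, 2], hsol⟩ hfin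
  have := huniq z hz
  subst this
  have := hzb 1
  simp at this
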